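/- arXiv:1605.02352 — 4 statements merged into one kernel-verified Lean document; each statement's English description precedes it below -/
import Mathlib

section
/- The functions m_0,…,m_{b−1} : Σ^∞ → ℝ defined by m_r(v) = Σ_{k≥0} π_r(v^{(k)}) (where π_r is the fundamental probability with initial distribution given by row r of the transition matrix, and v^{(k)} is the length-k prefix of v) form the unique family of bounded functions on Σ^∞ satisfying the system m_r(v) = 1 + p_{r v_1} m_{v_1}(v̄) for all r ∈ Σ and v ∈ Σ^∞, where v̄ = v_2 v_3 … denotes the shift of v. -/
/-- `prefProb p r v k` is the probability `π_r(v^{(k)})` that a Markov chain with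
transition matrix `p` started from the row `r` produces the prefix `v_1 … v_k`. -/
def prefProb {b : ℕ} (p : Fin b → Fin b → ℝ) : Fin b → (ℕ → Fin b) → ℕ → ℝ
  | _, _, 0 => 1
  | r, v, (k + 1) => p r (v 0) * prefProb p (v 0) (fun i => v (i + 1)) k

/-- The functions `m_r(v) = Σ_{k ≥ 0} π_r(v^{(k)})` form the unique family of bounded
functions on `Σ^∞` satisfying `m_r(v) = 1 + p_{r v₁} m_{v₁}(v̄)`. -/
theorem m_unique_bounded_solution (b : ℕ) (hb : 2 ≤ b)
    (p : Fin b → Fin b → ℝ)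
    (hp : ∀ i j, 0 < p i j ∧ p i j < 1)
    (hstoch : ∀ i, ∑ j, p i j = 1)
    (m : Fin b → (ℕ → Fin b) → ℝ)
    (hm : ∀ r v, m r v = ∑' k : ℕ, prefProb p r v k) :
    ((∀ r, ∃ C : ℝ, ∀ v, |m r v| ≤ C) ∧
      (∀ r (v : ℕ → Fin b), m r v = 1 + p r (v 0) * m (v 0) (fun i => v (i + 1)))) ∧
    (∀ f : Fin b → (ℕ → Fin b) → ℝ,
      (∀ r, ∃ C : ℝ, ∀ v, |f r v| ≤ C) →
      (∀ r (v : ℕ → Fin b), f r v = 1 + p r (v 0) * f (v 0) (fun i => v (i + 1))) →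
      f = m) := by
  have hbpos : 0 < b := by omega
  haveI : NeZero b := ⟨by omega⟩
  haveI : Nonempty (Fin b) := ⟨⟨0, hbpos⟩⟩
  -- uniform bound q on the entries
  set q : ℝ := Finset.univ.sup' (Finset.univ_nonempty) (fun ij : Fin b × Fin b => p ij.1 ij.2)
    with hqdef
  have hpq : ∀ i j, p i j ≤ q := fun i j =>
    Finset.le_sup' (fun ij : Fin b × Fin b => p ij.1 ij.2) (Finset.mem_univ (i, j))
  have hq1 : q < 1 := by
    rw [hqdef, Finset.sup'_lt_iff]
    intro ij _
    exact (hp ij.1 ij.2).2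
  have hq0 : 0 ≤ q :=
    le_trans (hp ⟨0, hbpos⟩ ⟨0, hbpos⟩).1.le (hpq _ _)
  -- nonnegativity and geometric bound on prefProb
  have hnn : ∀ k (r : Fin b) (v : ℕ → Fin b), 0 ≤ prefProb p r v k := by
    intro k
    induction k with
    | zero => intro r v; simp [prefProb]
    | succ n ih =>
      intro r v
      exact mul_nonneg (hp r (v 0)).1.le (ih _ _)
  have hle : ∀ k (r : Fin b) (v : ℕ → Fin b), prefProb p r v k ≤ q ^ k := by
    intro k
    induction k with
    | zero => intro r v; simp [prefProb]
    | succ n ih =>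
      intro r v
      rw [pow_succ']
      exact mul_le_mul (hpq _ _) (ih _ _) (hnn _ _ _) hq0
  have hgeo : Summable (fun k : ℕ => q ^ k) := summable_geometric_of_lt_one hq0 hq1
  have hsum : ∀ (r : Fin b) (v : ℕ → Fin b), Summable (fun k => prefProb p r v k) :=
    fun r v => Summable.of_nonneg_of_le (hnn · r v) (hle · r v) hgeo
  -- the recurrence for m
  have hrec : ∀ (r : Fin b) (v : ℕ → Fin b),
      m r v = 1 + p r (v 0) * m (v 0) (fun i => v (i + 1)) := by
    intro r v
    rw [hm, hm, Summable.tsum_eq_zero_add (hsum r v)]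
    show (1 : ℝ) + ∑' k : ℕ, p r (v 0) * prefProb p (v 0) (fun i => v (i + 1)) k = _
    rw [tsum_mul_left]
  refine ⟨⟨?_, hrec⟩, ?_⟩
  · -- boundedness of m
    intro r
    refine ⟨(1 - q)⁻¹, fun v => ?_⟩
    rw [abs_of_nonneg (by rw [hm]; exact tsum_nonneg (hnn · r v)), hm]
    calc ∑' k, prefProb p r v k ≤ ∑' k : ℕ, q ^ k :=
          Summable.tsum_le_tsum (hle · r v) (hsum r v) hgeo
      _ = (1 - q)⁻¹ := tsum_geometric_of_lt_one hq0 hq1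
  · -- uniqueness
    intro f hfb hfe
    set g : Fin b → (ℕ → Fin b) → ℝ := fun r v => f r v - m r v with hgdef
    have hgrec : ∀ (r : Fin b) (v : ℕ → Fin b),
        g r v = p r (v 0) * g (v 0) (fun i => v (i + 1)) := by
      intro r v
      simp only [hgdef, hfe r v, hrec r v]
      ring
    have hgb : ∀ r : Fin b, ∃ C : ℝ, ∀ v, |g r v| ≤ C := by
      intro r
      obtain ⟨C1, hC1⟩ := hfb r
      refine ⟨C1 + (1 - q)⁻¹, fun v => ?_⟩
      have hmb : |m r v| ≤ (1 - q)⁻¹ := by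
        rw [abs_of_nonneg (by rw [hm]; exact tsum_nonneg (hnn · r v)), hm]
        calc ∑' k, prefProb p r v k ≤ ∑' k : ℕ, q ^ k :=
              Summable.tsum_le_tsum (hle · r v) (hsum r v) hgeo
          _ = (1 - q)⁻¹ := tsum_geometric_of_lt_one hq0 hq1
      calc |g r v| ≤ |f r v| + |m r v| := abs_sub (f r v) (m r v)
        _ ≤ C1 + (1 - q)⁻¹ := add_le_add (hC1 v) hmb
    choose Cg hCg using hgb
    set C : ℝ := Finset.univ.sup' Finset.univ_nonempty Cg with hCdef
    have hC : ∀ (r : Fin b) (v : ℕ → Fin b), |g r v| ≤ C := fun r v =>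
      le_trans (hCg r v) (Finset.le_sup' Cg (Finset.mem_univ r))
    have key : ∀ n (r : Fin b) (v : ℕ → Fin b), |g r v| ≤ q ^ n * C := by
      intro n
      induction n with
      | zero => intro r v; simpa using hC r v
      | succ n ih =>
        intro r v
        rw [hgrec r v, abs_mul, abs_of_nonneg (hp r (v 0)).1.le]
        calc p r (v 0) * |g (v 0) fun i => v (i + 1)|
            ≤ q * (q ^ n * C) :=
              mul_le_mul (hpq _ _) (ih _ _) (abs_nonneg _) hq0
          _ = q ^ (n + 1) * C := by ring
    have hzero : ∀ (r : Fin b) (v : ℕ → Fin b), g r v = 0 := by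
      intro r v
      have htend : Filter.Tendsto (fun n : ℕ => q ^ n * C) Filter.atTop (nhds 0) := by
        have := (tendsto_pow_atTop_nhds_zero_of_lt_one hq0 hq1).mul_const C
        simpa using this
      have : |g r v| ≤ 0 := ge_of_tendsto' htend (fun n => key n r v)
      exact abs_eq_zero.mp (le_antisymm this (abs_nonneg _))
    funext r v
    have := hzero r v
    simp only [hgdef] at this
    linarith
end

section
/- Under the same assumptions, the family F_0,…,F_{b−1} is the unique family of bounded functions on Σ^∞ satisfying the system F_r(v) = p_{r v_1} F_{v_1}(v̄) + Σ_{k=0}^{v_1 − 1} p_{rk} for all r ∈ Σ and v ∈ Σ^∞. -/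
open scoped Classical

/-- Lexicographic comparison of a finite word `u ∈ Σ^n` with an infinite string `w`:
`u ≤ w` iff at every index, if `u` and `w` agree strictly before it, then the symbol of
`u` there is at most that of `w`. -/
def wordLe {b n : ℕ} (u : Fin n → Fin b) (w : ℕ → Fin b) : Prop :=
  ∀ i : Fin n, (∀ k : Fin n, (k : ℕ) < (i : ℕ) → u k = w k) → u i ≤ w i

/-- Extension of a finite word `u ∈ Σ^n` to an infinite string (using `w` beyond `n`). -/
def extendWord {b n : ℕ} (u : Fin n → Fin b) (w : ℕ → Fin b) : ℕ → Fin b :=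
  fun i => if h : i < n then u ⟨i, h⟩ else w i

lemma extend_zero {b n : ℕ} (a : Fin b) (u : Fin n → Fin b) (w : ℕ → Fin b) :
    extendWord (Fin.cons a u) w 0 = a := by
  simp [extendWord]

lemma extend_shift {b n : ℕ} (a : Fin b) (u : Fin n → Fin b) (w : ℕ → Fin b) :
    (fun i => extendWord (Fin.cons a u) w (i + 1)) = extendWord u (fun i => w (i + 1)) := by
  funext i
  simp only [extendWord]
  by_cases h : i < n
  · rw [dif_pos (by omega : i + 1 < n + 1), dif_pos h]
    have : (⟨i + 1, by omega⟩ : Fin (n + 1)) = Fin.succ ⟨i, h⟩ := rfl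
    rw [this, Fin.cons_succ]
  · rw [dif_neg (by omega), dif_neg h]

lemma prefProb_cons {b n : ℕ} (p : Fin b → Fin b → ℝ) (r a : Fin b) (u : Fin n → Fin b)
    (w : ℕ → Fin b) :
    prefProb p r (extendWord (Fin.cons a u) w) (n + 1)
      = p r a * prefProb p a (extendWord u (fun i => w (i + 1))) n := by
  show p r _ * _ = _
  rw [extend_zero, extend_shift]

lemma prefProb_nonneg {b : ℕ} {p : Fin b → Fin b → ℝ} (hp : ∀ i j, 0 ≤ p i j) :
    ∀ (n : ℕ) (r : Fin b) (w : ℕ → Fin b), 0 ≤ prefProb p r w n := by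
  intro n
  induction n with
  | zero => intro r w; simp [prefProb]
  | succ n ih => intro r w; exact mul_nonneg (hp _ _) (ih _ _)

lemma sum_prefProb_one {b : ℕ} {p : Fin b → Fin b → ℝ} (hstoch : ∀ i, ∑ j, p i j = 1) :
    ∀ (n : ℕ) (r : Fin b) (w : ℕ → Fin b),
      ∑ u : Fin n → Fin b, prefProb p r (extendWord u w) n = 1 := by
  intro n
  induction n with
  | zero => intro r w; simp [prefProb]
  | succ n ih =>
      intro r w
      rw [← Equiv.sum_comp (Fin.consEquiv (fun _ : Fin (n + 1) => Fin b))
        (fun u => prefProb p r (extendWord u w) (n + 1)), Fintype.sum_prod_type]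
      have hce : ∀ x : Fin b × (Fin n → Fin b),
          (Fin.consEquiv (fun _ : Fin (n + 1) => Fin b)) x = Fin.cons x.1 x.2 :=
        fun x => funext fun i => Fin.consEquiv_apply _ _ _
      simp only [hce, prefProb_cons]
      rw [Finset.sum_congr rfl (fun a _ => by rw [← Finset.mul_sum, ih, mul_one] :
        ∀ a ∈ Finset.univ, (∑ u : Fin n → Fin b,
          p r a * prefProb p a (extendWord u (fun i => w (i + 1))) n) = p r a)]
      exact hstoch r

lemma wordLe_cons {b n : ℕ} (a : Fin b) (u : Fin n → Fin b) (w : ℕ → Fin b) :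
    wordLe (Fin.cons a u) w ↔ a < w 0 ∨ (a = w 0 ∧ wordLe u (fun i => w (i + 1))) := by
  constructor
  · intro h
    have h0 : a ≤ w 0 := by simpa using h 0 (fun k hk => by simp at hk)
    rcases lt_or_eq_of_le h0 with h0 | h0
    · exact Or.inl h0
    · refine Or.inr ⟨h0, fun i hi => ?_⟩
      have key : (Fin.cons a u : Fin (n + 1) → Fin b) i.succ ≤ w (i.succ : ℕ) := by
        apply h
        intro k hk
        rcases Fin.eq_zero_or_eq_succ k with rfl | ⟨j, rfl⟩
        · simpa using h0
        · have hji : (j : ℕ) < (i : ℕ) := by simpa using hk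
          simpa using hi j hji
      simpa using key
  · rintro (h | ⟨h0, h⟩) <;> intro i <;>
      rcases Fin.eq_zero_or_eq_succ i with rfl | ⟨j, rfl⟩ <;> intro hprev
    · simpa using le_of_lt h
    · have : a = w 0 := by simpa using hprev 0 (by simp)
      exact absurd (this ▸ h) (lt_irrefl _)
    · simpa using le_of_eq h0
    · have hu : ∀ k : Fin n, (k : ℕ) < (j : ℕ) → u k = w ((k : ℕ) + 1) :=
        fun k hk => by simpa using hprev k.succ (by simp; omega)
      simpa using h j hu

noncomputable def Ssum {b : ℕ} (p : Fin b → Fin b → ℝ) (n : ℕ) (r : Fin b)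
    (w : ℕ → Fin b) : ℝ :=
  ∑ u : Fin n → Fin b, if wordLe u w then prefProb p r (extendWord u w) n else 0

lemma Ssum_rec {b : ℕ} {p : Fin b → Fin b → ℝ} (hstoch : ∀ i, ∑ j, p i j = 1)
    (n : ℕ) (r : Fin b) (w : ℕ → Fin b) :
    Ssum p (n + 1) r w = p r (w 0) * Ssum p n (w 0) (fun i => w (i + 1)) +
      ∑ k ∈ Finset.univ.filter (fun k => k < w 0), p r k := by
  set w' := fun i => w (i + 1) with hw'
  unfold Ssum
  rw [← Equiv.sum_comp (Fin.consEquiv (fun _ : Fin (n + 1) => Fin b))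
    (fun u => if wordLe u w then prefProb p r (extendWord u w) (n + 1) else 0),
    Fintype.sum_prod_type]
  have hce : ∀ x : Fin b × (Fin n → Fin b),
      (Fin.consEquiv (fun _ : Fin (n + 1) => Fin b)) x = Fin.cons x.1 x.2 :=
    fun x => funext fun i => Fin.consEquiv_apply _ _ _
  simp only [hce]
  have inner : ∀ a : Fin b,
      (∑ u : Fin n → Fin b,
        if wordLe (Fin.cons a u) w then prefProb p r (extendWord (Fin.cons a u) w) (n + 1)
        else 0)
      = (if a < w 0 then p r a else 0) +
        (if a = w 0 then p r (w 0) *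
          (∑ u : Fin n → Fin b, if wordLe u w' then prefProb p a (extendWord u w') n else 0)
          else 0) := by
    intro a
    rcases lt_trichotomy a (w 0) with h | h | h
    · rw [if_pos h, if_neg (ne_of_lt h), add_zero]
      have : ∀ u : Fin n → Fin b, wordLe (Fin.cons a u) w :=
        fun u => (wordLe_cons a u w).mpr (Or.inl h)
      calc (∑ u : Fin n → Fin b,
              if wordLe (Fin.cons a u) w then prefProb p r (extendWord (Fin.cons a u) w) (n + 1)
              else 0)
          = ∑ u : Fin n → Fin b, p r a * prefProb p a (extendWord u w') n := by
            refine Finset.sum_congr rfl fun u _ => ?_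
            rw [if_pos (this u), prefProb_cons]
        _ = p r a := by rw [← Finset.mul_sum, sum_prefProb_one hstoch, mul_one]
    · rw [if_neg (by rw [h]; exact lt_irrefl _), if_pos h, zero_add, ← h]
      rw [Finset.mul_sum]
      refine Finset.sum_congr rfl fun u _ => ?_
      have hcond : wordLe (Fin.cons a u) w ↔ wordLe u w' := by
        rw [wordLe_cons]
        constructor
        · rintro (h' | ⟨_, h'⟩)
          · exact absurd (h ▸ h') (lt_irrefl _)
          · exact h'
        · exact fun h' => Or.inr ⟨h, h'⟩
      by_cases hc : wordLe u w'
      · rw [if_pos ((hcond).mpr hc), if_pos hc, prefProb_cons]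
      · rw [if_neg (fun hx => hc ((hcond).mp hx)), if_neg hc, mul_zero]
    · rw [if_neg (not_lt_of_gt h), if_neg (ne_of_gt h), add_zero]
      refine Finset.sum_eq_zero fun u _ => ?_
      rw [if_neg]
      intro hx
      rcases (wordLe_cons a u w).mp hx with h' | ⟨h', _⟩
      · exact absurd h (not_lt_of_gt h')
      · exact absurd h (by rw [h']; exact lt_irrefl _)
  rw [Finset.sum_congr rfl fun a _ => inner a, Finset.sum_add_distrib]
  rw [Finset.sum_ite_eq' Finset.univ (w 0)
    (fun a => p r (w 0) *
      (∑ u : Fin n → Fin b, if wordLe u w' then prefProb p a (extendWord u w') n else 0))]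
  rw [if_pos (Finset.mem_univ _), ← Finset.sum_filter, add_comm]

lemma Ssum_nonneg {b : ℕ} {p : Fin b → Fin b → ℝ} (hp : ∀ i j, 0 ≤ p i j)
    (n : ℕ) (r : Fin b) (w : ℕ → Fin b) : 0 ≤ Ssum p n r w := by
  refine Finset.sum_nonneg fun u _ => ?_
  split
  · exact prefProb_nonneg hp n r _
  · exact le_refl 0

lemma Ssum_le_one {b : ℕ} {p : Fin b → Fin b → ℝ} (hp : ∀ i j, 0 ≤ p i j)
    (hstoch : ∀ i, ∑ j, p i j = 1) (n : ℕ) (r : Fin b) (w : ℕ → Fin b) :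
    Ssum p n r w ≤ 1 := by
  calc Ssum p n r w ≤ ∑ u : Fin n → Fin b, prefProb p r (extendWord u w) n := by
        refine Finset.sum_le_sum fun u _ => ?_
        split
        · exact le_refl _
        · exact prefProb_nonneg hp n r _
    _ = 1 := sum_prefProb_one hstoch n r w

/-- The functions `F_r(w) = lim_n Σ_{v ≤ w, v ∈ Σ^n} π_r(v)` form the unique family of
bounded functions on `Σ^∞` satisfying
`F_r(v) = p_{r v₁} F_{v₁}(v̄) + Σ_{k < v₁} p_{r k}`. -/
theorem F_unique_bounded_solution (b : ℕ) (hb : 2 ≤ b)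
    (p : Fin b → Fin b → ℝ)
    (hp : ∀ i j, 0 < p i j ∧ p i j < 1)
    (hstoch : ∀ i, ∑ j, p i j = 1)
    (F : Fin b → (ℕ → Fin b) → ℝ)
    (hF : ∀ r (w : ℕ → Fin b),
      Filter.Tendsto
        (fun n => ∑ u : Fin n → Fin b,
          if wordLe u w then prefProb p r (extendWord u w) n else 0)
        Filter.atTop (nhds (F r w))) :
    ((∀ r, ∃ C : ℝ, ∀ v, |F r v| ≤ C) ∧
      (∀ r (v : ℕ → Fin b),
        F r v = p r (v 0) * F (v 0) (fun i => v (i + 1)) +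
          ∑ k ∈ Finset.univ.filter (fun k => k < v 0), p r k)) ∧
    (∀ G : Fin b → (ℕ → Fin b) → ℝ,
      (∀ r, ∃ C : ℝ, ∀ v, |G r v| ≤ C) →
      (∀ r (v : ℕ → Fin b),
        G r v = p r (v 0) * G (v 0) (fun i => v (i + 1)) +
          ∑ k ∈ Finset.univ.filter (fun k => k < v 0), p r k) →
      G = F) := by
  haveI : NeZero b := ⟨by omega⟩
  have hp0 : ∀ i j, 0 ≤ p i j := fun i j => (hp i j).1.le
  have hFt : ∀ r (w : ℕ → Fin b),
      Filter.Tendsto (fun n => Ssum p n r w) Filter.atTop (nhds (F r w)) := hF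
  -- boundedness of F
  have hFb : ∀ r (v : ℕ → Fin b), |F r v| ≤ 1 := by
    intro r v
    rw [abs_le]
    constructor
    · have : (-1 : ℝ) ≤ 0 := by norm_num
      refine this.trans (ge_of_tendsto' (hFt r v) fun n => Ssum_nonneg hp0 n r v)
    · exact le_of_tendsto' (hFt r v) fun n => Ssum_le_one hp0 hstoch n r v
  -- the functional equation for F
  have hFeq : ∀ r (v : ℕ → Fin b),
      F r v = p r (v 0) * F (v 0) (fun i => v (i + 1)) +
        ∑ k ∈ Finset.univ.filter (fun k => k < v 0), p r k := by
    intro r v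
    have h1 : Filter.Tendsto (fun n => Ssum p (n + 1) r v) Filter.atTop (nhds (F r v)) :=
      (hFt r v).comp (Filter.tendsto_add_atTop_nat 1)
    have h2 : Filter.Tendsto (fun n => Ssum p (n + 1) r v) Filter.atTop
        (nhds (p r (v 0) * F (v 0) (fun i => v (i + 1)) +
          ∑ k ∈ Finset.univ.filter (fun k => k < v 0), p r k)) := by
      simp only [Ssum_rec hstoch]
      exact (((hFt (v 0) (fun i => v (i + 1))).const_mul _).add_const _)
    exact tendsto_nhds_unique h1 h2
  refine ⟨⟨fun r => ⟨1, hFb r⟩, hFeq⟩, ?_⟩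
  -- uniqueness
  intro G hGb hGeq
  set D : Fin b → (ℕ → Fin b) → ℝ := fun r w => G r w - F r w with hD
  have hDrec : ∀ r (w : ℕ → Fin b), D r w = p r (w 0) * D (w 0) (fun i => w (i + 1)) := by
    intro r w
    simp only [hD]
    rw [hGeq r w, hFeq r w]
    ring
  -- iterate
  have step : ∀ (n : ℕ) (r : Fin b) (w : ℕ → Fin b),
      ∃ s : Fin b, D r w = prefProb p r w n * D s (fun i => w (i + n)) := by
    intro n
    induction n with
    | zero =>
        intro r w
        exact ⟨r, by simp [prefProb]⟩
    | succ n ih =>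
        intro r w
        obtain ⟨s, hs⟩ := ih (w 0) (fun i => w (i + 1))
        refine ⟨s, ?_⟩
        rw [hDrec r w, hs]
        have hfun : (fun i => w (i + n + 1)) = (fun i => w (i + (n + 1))) :=
          funext fun i => congrArg w (by omega)
        rw [show prefProb p r w (n + 1)
            = p r (w 0) * prefProb p (w 0) (fun i => w (i + 1)) n from rfl, mul_assoc, hfun]
  -- uniform bound on |D|
  choose C hC using hGb
  set M : ℝ := ∑ r : Fin b, (C r + 1) with hM
  have hCM : ∀ r, C r + 1 ≤ M := by
    intro r
    refine Finset.single_le_sum (f := fun r => C r + 1) (fun s _ => ?_) (Finset.mem_univ r)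
    have : (0 : ℝ) ≤ C s := le_trans (abs_nonneg _) (hC s (fun _ => 0))
    show (0 : ℝ) ≤ C s + 1
    linarith
  have hDM : ∀ r (w : ℕ → Fin b), |D r w| ≤ M := by
    intro r w
    calc |D r w| ≤ |G r w| + |F r w| := abs_sub _ _
      _ ≤ C r + 1 := add_le_add (hC r w) (hFb r w)
      _ ≤ M := hCM r
  -- the max transition probability
  have hne : (Finset.univ : Finset (Fin b × Fin b)).Nonempty := Finset.univ_nonempty
  set q : ℝ := Finset.univ.sup' hne (fun ij : Fin b × Fin b => p ij.1 ij.2) with hq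
  have hq1 : q < 1 := Finset.sup'_lt_iff hne |>.mpr fun ij _ => (hp ij.1 ij.2).2
  have hpq : ∀ i j, p i j ≤ q := fun i j =>
    Finset.le_sup' (fun ij : Fin b × Fin b => p ij.1 ij.2) (Finset.mem_univ (i, j))
  have hq0 : 0 ≤ q := le_trans (hp 0 0).1.le (hpq 0 0)
  have hpref_le : ∀ (n : ℕ) (r : Fin b) (w : ℕ → Fin b), prefProb p r w n ≤ q ^ n := by
    intro n
    induction n with
    | zero => intro r w; simp [prefProb]
    | succ n ih =>
        intro r w
        calc prefProb p r w (n + 1) = p r (w 0) * prefProb p (w 0) (fun i => w (i + 1)) n := rfl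
          _ ≤ q * q ^ n :=
            mul_le_mul (hpq _ _) (ih _ _) (prefProb_nonneg hp0 _ _ _) hq0
          _ = q ^ (n + 1) := (pow_succ' q n).symm
  -- conclude
  funext r w
  have hbound : ∀ n : ℕ, |D r w| ≤ q ^ n * M := by
    intro n
    obtain ⟨s, hs⟩ := step n r w
    rw [hs, abs_mul, abs_of_nonneg (prefProb_nonneg hp0 _ _ _)]
    exact mul_le_mul (hpref_le n r w) (hDM s _) (abs_nonneg _)
      (pow_nonneg hq0 n)
  have hlim : Filter.Tendsto (fun n : ℕ => q ^ n * M) Filter.atTop (nhds 0) := by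
    have := (tendsto_pow_atTop_nhds_zero_of_lt_one hq0 hq1).mul_const M
    simpa using this
  have : |D r w| ≤ 0 := ge_of_tendsto' hlim hbound
  have : D r w = 0 := abs_nonpos_iff.mp this
  have := sub_eq_zero.mp this
  exact this
end

section
/- For the memoryless source with p_r = (1−β)/(1−β^b)·β^r (r ∈ Σ, β > 0; p_r = 1/b if β = 1), the function m(v) = Σ_{k≥0} π(v^{(k)}) satisfies m(v) = α F(v) + γ for all v ∈ Σ^∞, where γ = (1−β^b)/(β−β^b), α = (β−1)γ (with γ = b/(b−1) and α = 0 when β = 1), and F(v) = P(S ≤ v) is the distribution function of the source. -/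
open scoped Classical

private lemma pow_ne_one_aux {β : ℝ} (hβ : 0 < β) (hβ1 : β ≠ 1) {n : ℕ} (hn : n ≠ 0) :
    β ^ n ≠ 1 := by
  rcases lt_or_gt_of_ne hβ1 with h | h
  · exact ne_of_lt (pow_lt_one₀ hβ.le h hn)
  · exact ne_of_gt (one_lt_pow₀ h hn)

/-- For a memoryless source with `p_r = (1−β)/(1−β^b) β^r`, the function
`m(v) = Σ_{k≥0} π(v^{(k)})` satisfies `m = α F + γ`, where `F` is the (unique bounded)
distribution function of the source, `γ = (1−β^b)/(β−β^b)` and `α = (β−1)γ`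
(with `γ = b/(b−1)`, `α = 0` when `β = 1`). -/
theorem m_eq_alpha_F_add_gamma (b : ℕ) (hb : 2 ≤ b) (β : ℝ) (hβ : 0 < β)
    (p : Fin b → ℝ)
    (hp : ∀ r : Fin b, p r = if β = 1 then (1 : ℝ) / b else (1 - β) / (1 - β ^ b) * β ^ (r : ℕ))
    (F : (ℕ → Fin b) → ℝ)
    (hFbdd : ∃ C : ℝ, ∀ v, |F v| ≤ C)
    (hF : ∀ v : ℕ → Fin b,
      F v = (∑ k ∈ Finset.univ.filter (fun k => k < v 0), p k) +
        p (v 0) * F (fun i => v (i + 1)))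
    (γ α : ℝ)
    (hγ : γ = if β = 1 then (b : ℝ) / (b - 1) else (1 - β ^ b) / (β - β ^ b))
    (hα : α = (β - 1) * γ) :
    ∀ v : ℕ → Fin b,
      (∑' k : ℕ, ∏ i ∈ Finset.range k, p (v i)) = α * F v + γ := by
  have hbR : (1 : ℝ) < (b : ℝ) := by exact_mod_cast (by omega : 1 < b)
  -- the value function on ℕ
  set g : ℕ → ℝ := fun j => if β = 1 then (1 : ℝ) / b else (1 - β) / (1 - β ^ b) * β ^ j
    with hg
  have hpg : ∀ r : Fin b, p r = g (r : ℕ) := fun r => hp r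
  -- positivity
  have hgpos : ∀ j : ℕ, 0 < g j := by
    intro j
    by_cases h1 : β = 1
    · simp only [hg, if_pos h1]
      positivity
    · simp only [hg, if_neg h1]
      rcases lt_or_gt_of_ne h1 with h | h
      · have hb1 : β ^ b < 1 := pow_lt_one₀ hβ.le h (by omega)
        exact mul_pos (div_pos (by linarith) (by linarith)) (pow_pos hβ j)
      · have hb1 : 1 < β ^ b := one_lt_pow₀ h (by omega)
        exact mul_pos (div_pos_of_neg_of_neg (by linarith) (by linarith)) (pow_pos hβ j)
  have hppos : ∀ r : Fin b, 0 < p r := fun r => (hpg r) ▸ hgpos r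
  -- sum is 1
  have hsum1 : ∑ r : Fin b, p r = 1 := by
    by_cases h1 : β = 1
    · simp only [hp, if_pos h1, Finset.sum_const, Finset.card_univ, Fintype.card_fin,
        nsmul_eq_mul]
      field_simp
    · have hβb : β ^ b ≠ 1 := pow_ne_one_aux hβ h1 (by omega)
      have : ∑ r : Fin b, p r = (1 - β) / (1 - β ^ b) * ∑ j ∈ Finset.range b, β ^ j := by
        rw [Finset.mul_sum]
        rw [← Fin.sum_univ_eq_sum_range (fun j => (1 - β) / (1 - β ^ b) * β ^ j) b]
        exact Finset.sum_congr rfl fun r _ => by rw [hp r, if_neg h1]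
      rw [this, geom_sum_eq h1]
      have h2 : (1 : ℝ) - β ^ b ≠ 0 := sub_ne_zero.mpr (Ne.symm hβb)
      have h3 : β - 1 ≠ 0 := sub_ne_zero.mpr h1
      field_simp
      ring
  -- sums over initial segments
  have hS : ∀ r : Fin b, (∑ k ∈ Finset.univ.filter (fun k => k < r), p k)
      = ∑ j ∈ Finset.range (r : ℕ), g j := by
    intro r
    have hrb := r.isLt
    calc ∑ k ∈ Finset.univ.filter (fun k => k < r), p k
        = ∑ k : Fin b, if (k : ℕ) < (r : ℕ) then g (k : ℕ) else 0 := by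
          rw [Finset.sum_filter]
          refine Finset.sum_congr rfl fun k _ => ?_
          rw [hpg k]
          simp only [Fin.lt_def]
      _ = ∑ j ∈ Finset.range b, if j < (r : ℕ) then g j else 0 :=
          Fin.sum_univ_eq_sum_range (fun j => if j < (r : ℕ) then g j else 0) b
      _ = ∑ j ∈ (Finset.range b).filter (fun j => j < (r : ℕ)), g j :=
          (Finset.sum_filter _ _).symm
      _ = ∑ j ∈ Finset.range (r : ℕ), g j := by
          congr 1
          ext j
          simp only [Finset.mem_filter, Finset.mem_range]
          omega
  -- the key algebraic identity
  have hkey : ∀ r : Fin b,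
      α * (∑ k ∈ Finset.univ.filter (fun k => k < r), p k) + γ = 1 + p r * γ := by
    intro r
    rw [hS r, hp r]
    by_cases h1 : β = 1
    · have hb1 : (b : ℝ) - 1 ≠ 0 := by linarith
      have hb0 : (b : ℝ) ≠ 0 := by linarith
      rw [hγ, if_pos h1, hα, hγ, if_pos h1, if_pos h1, h1]
      field_simp
      ring
    · have hβb : β ^ b ≠ 1 := pow_ne_one_aux hβ h1 (by omega)
      have hβb1 : β ^ (b - 1) ≠ 1 := pow_ne_one_aux hβ h1 (by omega)
      have h2 : (1 : ℝ) - β ^ b ≠ 0 := sub_ne_zero.mpr (Ne.symm hβb)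
      have h3 : β - 1 ≠ 0 := sub_ne_zero.mpr h1
      have hmul : β * β ^ (b - 1) = β ^ b := by
        rw [← pow_succ']
        congr 1
        omega
      have h4 : β - β ^ b ≠ 0 := by
        intro h
        apply hβb1
        have hβ0 : β ≠ 0 := ne_of_gt hβ
        have : β * 1 = β * β ^ (b - 1) := by rw [hmul]; linarith
        exact (mul_left_cancel₀ hβ0 this).symm
      have hsumr : ∑ j ∈ Finset.range (r : ℕ), g j
          = (1 - β) / (1 - β ^ b) * ((β ^ (r : ℕ) - 1) / (β - 1)) := by
        have : ∑ j ∈ Finset.range (r : ℕ), g j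
            = (1 - β) / (1 - β ^ b) * ∑ j ∈ Finset.range (r : ℕ), β ^ j := by
          rw [Finset.mul_sum]
          exact Finset.sum_congr rfl fun j _ => by simp [hg, if_neg h1]
        rw [this, geom_sum_eq h1]
      rw [hsumr, hγ, if_neg h1, hα, hγ, if_neg h1, if_neg h1]
      field_simp
      ring
  -- a uniform geometric bound on the probabilities
  have h0b : 0 < b := by omega
  have h1b : 1 < b := by omega
  set r0 : Fin b := ⟨0, h0b⟩ with hr0
  set r1 : Fin b := ⟨1, h1b⟩ with hr1
  set δ : ℝ := min (p r0) (p r1) with hδ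
  have hδpos : 0 < δ := lt_min (hppos r0) (hppos r1)
  set q : ℝ := 1 - δ with hq
  have hple : ∀ r : Fin b, p r ≤ q := by
    intro r
    obtain ⟨s, hsr, hδs⟩ : ∃ s : Fin b, r ≠ s ∧ δ ≤ p s := by
      by_cases h : r = r0
      · exact ⟨r1, by rw [h]; simp [hr0, hr1, Fin.ext_iff], min_le_right _ _⟩
      · exact ⟨r0, h, min_le_left _ _⟩
    have hpair : p r + p s ≤ ∑ t : Fin b, p t := by
      rw [← Finset.sum_pair hsr]
      exact Finset.sum_le_sum_of_subset_of_nonneg (Finset.subset_univ _)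
        (fun t _ _ => (hppos t).le)
    rw [hsum1] at hpair
    simp only [hq]
    linarith
  have hq0 : 0 ≤ q := le_trans (hppos r0).le (hple r0)
  have hq1 : q < 1 := by simp only [hq]; linarith
  -- summability and bounds for m
  have hπ_nonneg : ∀ (v : ℕ → Fin b) (k : ℕ), 0 ≤ ∏ i ∈ Finset.range k, p (v i) :=
    fun v k => Finset.prod_nonneg fun i _ => (hppos (v i)).le
  have hπ_le : ∀ (v : ℕ → Fin b) (k : ℕ), (∏ i ∈ Finset.range k, p (v i)) ≤ q ^ k := by
    intro v k
    calc (∏ i ∈ Finset.range k, p (v i)) ≤ ∏ _i ∈ Finset.range k, q :=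
          Finset.prod_le_prod (fun i _ => (hppos (v i)).le) (fun i _ => hple (v i))
      _ = q ^ k := by simp
  have hgeo : Summable (fun k : ℕ => q ^ k) := summable_geometric_of_lt_one hq0 hq1
  have hsummable : ∀ v : ℕ → Fin b, Summable (fun k => ∏ i ∈ Finset.range k, p (v i)) :=
    fun v => Summable.of_nonneg_of_le (hπ_nonneg v) (hπ_le v) hgeo
  set m : (ℕ → Fin b) → ℝ := fun v => ∑' k : ℕ, ∏ i ∈ Finset.range k, p (v i) with hm
  have hm_bound : ∀ v, |m v| ≤ (1 - q)⁻¹ := by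
    intro v
    rw [abs_of_nonneg (tsum_nonneg (hπ_nonneg v))]
    calc m v ≤ ∑' k : ℕ, q ^ k := Summable.tsum_le_tsum (hπ_le v) (hsummable v) hgeo
      _ = (1 - q)⁻¹ := tsum_geometric_of_lt_one hq0 hq1
  have hm_rec : ∀ v : ℕ → Fin b, m v = 1 + p (v 0) * m (fun i => v (i + 1)) := by
    intro v
    have : m v = (∏ i ∈ Finset.range 0, p (v i)) +
        ∑' k : ℕ, ∏ i ∈ Finset.range (k + 1), p (v i) := Summable.tsum_eq_zero_add (hsummable v)
    rw [this]
    simp only [Finset.range_zero, Finset.prod_empty]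
    congr 1
    calc (∑' k : ℕ, ∏ i ∈ Finset.range (k + 1), p (v i))
        = ∑' k : ℕ, p (v 0) * ∏ i ∈ Finset.range k, p (v (i + 1)) := by
          refine tsum_congr fun k => ?_
          rw [Finset.prod_range_succ']
          ring
      _ = p (v 0) * m (fun i => v (i + 1)) := tsum_mul_left
  -- the difference function
  obtain ⟨C, hC⟩ := hFbdd
  set D : (ℕ → Fin b) → ℝ := fun v => m v - (α * F v + γ) with hD
  have hD_rec : ∀ v : ℕ → Fin b, D v = p (v 0) * D (fun i => v (i + 1)) := by
    intro v
    have h1 := hm_rec v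
    have h2 := hF v
    have h3 := hkey (v 0)
    simp only [hD]
    rw [h1, h2]
    linear_combination -h3
  set M : ℝ := (1 - q)⁻¹ + (|α| * C + |γ|) with hM
  have hDM : ∀ v, |D v| ≤ M := by
    intro v
    have hb1 : |D v| ≤ |m v| + |α * F v + γ| := abs_sub _ _
    have hb2 : |α * F v + γ| ≤ |α| * C + |γ| := by
      calc |α * F v + γ| ≤ |α * F v| + |γ| := abs_add_le _ _
        _ = |α| * |F v| + |γ| := by rw [abs_mul]
        _ ≤ |α| * C + |γ| := by
            have := mul_le_mul_of_nonneg_left (hC v) (abs_nonneg α)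
            linarith
    have := hm_bound v
    simp only [hM]
    linarith
  have hiter : ∀ (n : ℕ) (v : ℕ → Fin b), |D v| ≤ q ^ n * M := by
    intro n
    induction n with
    | zero => intro v; simpa using hDM v
    | succ n ih =>
      intro v
      rw [hD_rec v, abs_mul, abs_of_nonneg (hppos (v 0)).le]
      calc p (v 0) * |D (fun i => v (i + 1))| ≤ q * (q ^ n * M) := by
            refine mul_le_mul (hple (v 0)) (ih _) (abs_nonneg _) hq0
        _ = q ^ (n + 1) * M := by ring
  intro v
  have hlim : Filter.Tendsto (fun n : ℕ => q ^ n * M) Filter.atTop (nhds 0) := by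
    simpa using (tendsto_pow_atTop_nhds_zero_of_lt_one hq0 hq1).mul_const M
  have habs : |D v| ≤ 0 := ge_of_tendsto' hlim (fun n => hiter n v)
  have hzero : D v = 0 := abs_eq_zero.mp (le_antisymm habs (abs_nonneg _))
  have : m v = α * F v + γ := by
    simp only [hD] at hzero
    linarith
  simpa [hm] using this
end

section
/- In the anti-symmetric case b = 2, p := p_{00} = p_{11}, the unique solution Z_0 of Z_0 ≐ (B_p p + (1−B_p)(1−p)) Z_0 + 1 (B_p Bernoulli(p), independent of Z_0) is given explicitly by Z_0 = ((1−2p)/(p(1−p))) ξ + 1/(1−p), where ξ is uniform on [0,1]; that is, the law of ((1−2p)/(p(1−p))) ξ + 1/(1−p) satisfies the perpetuity equation. -/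
open MeasureTheory

open Set Filter Topology

namespace PerpetuityAux

lemma map_affine_volume (α β : ℝ) (hα : α ≠ 0) :
    Measure.map (fun x : ℝ => α * x + β) volume = ENNReal.ofReal |α|⁻¹ • volume := by
  have : (fun x : ℝ => α * x + β) = (fun x : ℝ => x + β) ∘ (α * ·) := rfl
  rw [this, ← Measure.map_map (measurable_add_const β) (by fun_prop),
    Real.map_volume_mul_left hα, Measure.map_smul, map_add_right_eq_self volume β, abs_inv]

lemma measurableEmbedding_affine (α β : ℝ) (hα : α ≠ 0) :
    MeasurableEmbedding (fun x : ℝ => α * x + β) :=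
  (affineHomeomorph α β hα).toMeasurableEquiv.measurableEmbedding

lemma map_affine_restrict (α β : ℝ) (hα : α ≠ 0) (s t : Set ℝ)
    (h : (fun x : ℝ => α * x + β) ⁻¹' t = s) :
    Measure.map (fun x : ℝ => α * x + β) (volume.restrict s) =
      ENNReal.ofReal |α|⁻¹ • volume.restrict t := by
  rw [← h, ← (measurableEmbedding_affine α β hα).restrict_map, map_affine_volume α β hα,
    Measure.restrict_smul]

lemma restrict_Icc_add_restrict_Icc (u v w : ℝ) (h1 : u ≤ v) (h2 : v ≤ w) :
    (volume.restrict (Icc u v) + volume.restrict (Icc v w)) = volume.restrict (Icc u w) := by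
  rw [Measure.restrict_congr_set Ioc_ae_eq_Icc.symm,
    Measure.restrict_congr_set (s := Icc v w) Ioc_ae_eq_Icc.symm,
    Measure.restrict_congr_set (s := Icc u w) Ioc_ae_eq_Icc.symm,
    ← Set.Ioc_union_Ioc_eq_Ioc h1 h2,
    Measure.restrict_union (Set.Ioc_disjoint_Ioc_of_le le_rfl) measurableSet_Ioc]

lemma preimage_affine_Icc (α β l r : ℝ) (hα : 0 < α) :
    (fun x : ℝ => α * x + β) ⁻¹' Icc l r = Icc ((l - β)/α) ((r - β)/α) := by
  ext x
  simp only [mem_preimage, mem_Icc, le_div_iff₀ hα, div_le_iff₀ hα]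
  constructor <;> rintro ⟨h1, h2⟩ <;> constructor <;> nlinarith

lemma preimage_affine_Icc_neg (α β l r : ℝ) (hα : α < 0) :
    (fun x : ℝ => α * x + β) ⁻¹' Icc l r = Icc ((r - β)/α) ((l - β)/α) := by
  ext x
  simp only [mem_preimage, mem_Icc, le_div_iff_of_neg hα, div_le_iff_of_neg hα]
  constructor <;> rintro ⟨h1, h2⟩ <;> constructor <;> nlinarith

lemma coef_simp (a : ℝ) (ha : a ≠ 0) (α : ℝ) (hα : 0 < α) (μ : Measure ℝ) :
    ENNReal.ofReal α • (ENNReal.ofReal |a|⁻¹ • (ENNReal.ofReal |α|⁻¹ • μ))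
      = ENNReal.ofReal |a|⁻¹ • μ := by
  rw [smul_smul, smul_smul, ← ENNReal.ofReal_mul hα.le,
    ← ENNReal.ofReal_mul (by positivity), abs_of_pos hα,
    mul_right_comm, mul_inv_cancel₀ hα.ne', one_mul]

/-- The perpetuity equation for a measure. -/
def IsSol (p : ℝ) (μ : Measure ℝ) : Prop :=
  ENNReal.ofReal p • Measure.map (fun z : ℝ => p * z + 1) μ +
      ENNReal.ofReal (1 - p) • Measure.map (fun z : ℝ => (1 - p) * z + 1) μ = μ

variable {p : ℝ}

lemma IsSol.apply {μ : Measure ℝ} (h : IsSol p μ) {s : Set ℝ} (hs : MeasurableSet s) :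
    μ s = ENNReal.ofReal p * μ ((fun z : ℝ => p * z + 1) ⁻¹' s) +
      ENNReal.ofReal (1 - p) * μ ((fun z : ℝ => (1 - p) * z + 1) ⁻¹' s) := by
  conv_lhs => rw [← h]
  rw [Measure.add_apply, Measure.smul_apply, Measure.smul_apply,
    Measure.map_apply (by fun_prop) hs, Measure.map_apply (by fun_prop) hs,
    smul_eq_mul, smul_eq_mul]

lemma preimage_affine_Iio (α β x : ℝ) (hα : 0 < α) :
    (fun z : ℝ => α * z + β) ⁻¹' Iio x = Iio ((x - β)/α) := by
  ext z
  simp only [mem_preimage, mem_Iio, lt_div_iff₀ hα]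
  constructor <;> intro h <;> nlinarith

lemma preimage_affine_Ioi (α β x : ℝ) (hα : 0 < α) :
    (fun z : ℝ => α * z + β) ⁻¹' Ioi x = Ioi ((x - β)/α) := by
  ext z
  simp only [mem_preimage, mem_Ioi, div_lt_iff₀ hα]
  constructor <;> intro h <;> nlinarith

lemma preimage_affine_Iic (α x : ℝ) (hα : 0 < α) :
    (fun z : ℝ => α * z + 1) ⁻¹' Iic x = Iic ((x - 1)/α) := by
  ext z
  simp only [mem_preimage, mem_Iic, le_div_iff₀ hα]
  constructor <;> intro h <;> nlinarith

lemma ofReal_add_ofReal_sub (hp0 : 0 < p) (hp1 : p < 1) :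
    ENNReal.ofReal p + ENNReal.ofReal (1 - p) = 1 := by
  rw [← ENNReal.ofReal_add hp0.le (by linarith)]; norm_num

lemma IsSol.Iio_zero (hp0 : 0 < p) (hp1 : p < 1) {μ : Measure ℝ} [IsFiniteMeasure μ]
    (h : IsSol p μ) {x : ℝ} (hx : x ≤ 1) : μ (Iio x) = 0 := by
  have hq0 : 0 < 1 - p := by linarith
  have step : ∀ y : ℝ, y ≤ 1 → μ (Iio y) ≤ μ (Iio (y - 1)) := by
    intro y hy
    rw [h.apply measurableSet_Iio, preimage_affine_Iio p 1 y hp0,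
      preimage_affine_Iio (1-p) 1 y hq0]
    have t1 : μ (Iio ((y - 1)/p)) ≤ μ (Iio (y - 1)) := by
      apply measure_mono (Iio_subset_Iio _)
      rw [div_le_iff₀ hp0]; nlinarith
    have t2 : μ (Iio ((y - 1)/(1-p))) ≤ μ (Iio (y - 1)) := by
      apply measure_mono (Iio_subset_Iio _)
      rw [div_le_iff₀ hq0]; nlinarith
    calc ENNReal.ofReal p * μ (Iio ((y-1)/p)) + ENNReal.ofReal (1-p) * μ (Iio ((y-1)/(1-p)))
        ≤ ENNReal.ofReal p * μ (Iio (y-1)) + ENNReal.ofReal (1-p) * μ (Iio (y-1)) :=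
          add_le_add (mul_le_mul_right t1 _) (mul_le_mul_right t2 _)
      _ = (ENNReal.ofReal p + ENNReal.ofReal (1-p)) * μ (Iio (y-1)) := (add_mul _ _ _).symm
      _ = μ (Iio (y-1)) := by rw [ofReal_add_ofReal_sub hp0 hp1, one_mul]
  have iter : ∀ n : ℕ, μ (Iio x) ≤ μ (Iio (x - n)) := by
    intro n
    induction n with
    | zero => simp
    | succ n ih =>
      calc μ (Iio x) ≤ μ (Iio (x - n)) := ih
        _ ≤ μ (Iio (x - n - 1)) := step _ (by linarith [Nat.cast_nonneg (α := ℝ) n])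
        _ = μ (Iio (x - (n+1:ℕ))) := by norm_num; ring_nf
  have hlim : Tendsto (fun n : ℕ => μ (Iio (x - n))) atTop (𝓝 (μ (⋂ n : ℕ, Iio (x - n)))) :=
    tendsto_measure_iInter_atTop (fun n => measurableSet_Iio.nullMeasurableSet)
      (fun i j hij => Iio_subset_Iio (sub_le_sub_left (by exact_mod_cast hij) x))
      ⟨0, measure_ne_top μ _⟩
  have hempty : (⋂ n : ℕ, Iio (x - (n:ℝ))) = ∅ := by
    ext y
    simp only [mem_iInter, mem_Iio, mem_empty_iff_false, iff_false, not_forall, not_lt]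
    obtain ⟨n, hn⟩ := exists_nat_ge (x - y)
    exact ⟨n, by linarith⟩
  rw [hempty, measure_empty] at hlim
  exact le_antisymm (ge_of_tendsto' hlim iter) zero_le

lemma IsSol.Ioi_zero (hp0 : 0 < p) (hp1 : p < 1) {μ : Measure ℝ} [IsFiniteMeasure μ]
    (h : IsSol p μ) {x : ℝ} (hx : (1 - max p (1 - p))⁻¹ < x) : μ (Ioi x) = 0 := by
  have hq0 : 0 < 1 - p := by linarith
  set m : ℝ := max p (1 - p) with hm_def
  have hm0 : 0 < m := lt_max_of_lt_left hp0
  have hm1 : m < 1 := max_lt hp1 (by linarith)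
  have hpm : p ≤ m := le_max_left _ _
  have hqm : 1 - p ≤ m := le_max_right _ _
  set K : ℝ := (1 - m)⁻¹ with hK_def
  have hK1 : 1 < K := by
    rw [hK_def, lt_inv_comm₀ (by norm_num) (by linarith)]; linarith
  have hKm : m * K = K - 1 := by
    have h1m : (1:ℝ) - m ≠ 0 := by linarith
    rw [hK_def]; field_simp [h1m]; ring
  have step : ∀ y : ℝ, 1 ≤ y → μ (Ioi y) ≤ μ (Ioi ((y - 1)/m)) := by
    intro y hy
    rw [h.apply measurableSet_Ioi, preimage_affine_Ioi p 1 y hp0,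
      preimage_affine_Ioi (1-p) 1 y hq0]
    have t1 : μ (Ioi ((y - 1)/p)) ≤ μ (Ioi ((y - 1)/m)) :=
      measure_mono (Ioi_subset_Ioi (div_le_div_of_nonneg_left (by linarith) hp0 hpm))
    have t2 : μ (Ioi ((y - 1)/(1-p))) ≤ μ (Ioi ((y - 1)/m)) :=
      measure_mono (Ioi_subset_Ioi (div_le_div_of_nonneg_left (by linarith) hq0 hqm))
    calc ENNReal.ofReal p * μ (Ioi ((y-1)/p)) + ENNReal.ofReal (1-p) * μ (Ioi ((y-1)/(1-p)))
        ≤ ENNReal.ofReal p * μ (Ioi ((y-1)/m)) + ENNReal.ofReal (1-p) * μ (Ioi ((y-1)/m)) :=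
          add_le_add (mul_le_mul_right t1 _) (mul_le_mul_right t2 _)
      _ = (ENNReal.ofReal p + ENNReal.ofReal (1-p)) * μ (Ioi ((y-1)/m)) := (add_mul _ _ _).symm
      _ = μ (Ioi ((y-1)/m)) := by rw [ofReal_add_ofReal_sub hp0 hp1, one_mul]
  set Y : ℕ → ℝ := fun n => Nat.rec x (fun _ z => (z - 1)/m) n with hY_def
  have hY0 : Y 0 = x := rfl
  have hYs : ∀ n, Y (n + 1) = (Y n - 1)/m := fun n => rfl
  have hgrow : ∀ n : ℕ, K + (x - K) * (1/m)^n ≤ Y n := by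
    intro n
    induction n with
    | zero => simp [hY0]
    | succ n ih =>
      rw [hYs, le_div_iff₀ hm0]
      have hpow : (1/m)^(n+1) * m = (1/m)^n := by
        rw [pow_succ, mul_assoc, one_div, inv_mul_cancel₀ hm0.ne', mul_one]
      have expand : (K + (x-K)*(1/m)^(n+1)) * m = (K - 1) + (x-K)*(1/m)^n := by
        rw [← hpow, ← hKm]; ring
      rw [expand]
      linarith [ih]
  have hYK : ∀ n, K ≤ Y n := by
    intro n
    refine le_trans ?_ (hgrow n)
    nlinarith [pow_pos (one_div_pos.mpr hm0) n]
  have chain : ∀ n, μ (Ioi x) ≤ μ (Ioi (Y n)) := by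
    intro n
    induction n with
    | zero => exact le_of_eq (by rw [hY0])
    | succ n ih =>
      refine ih.trans ?_
      rw [hYs]
      exact step (Y n) (le_of_lt (lt_of_lt_of_le hK1 (hYK n)))
  have hmono : Monotone Y := by
    apply monotone_nat_of_le_succ
    intro n
    rw [hYs, le_div_iff₀ hm0]
    nlinarith [hYK n, mul_nonneg (sub_nonneg.mpr (hYK n)) (by linarith : (0:ℝ) ≤ 1 - m)]
  have hlim : Tendsto (fun n : ℕ => μ (Ioi (Y n))) atTop (𝓝 (μ (⋂ n : ℕ, Ioi (Y n)))) :=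
    tendsto_measure_iInter_atTop (fun n => measurableSet_Ioi.nullMeasurableSet)
      (fun i j hij => Ioi_subset_Ioi (hmono hij)) ⟨0, measure_ne_top μ _⟩
  have hempty : (⋂ n : ℕ, Ioi (Y n)) = ∅ := by
    ext y
    simp only [mem_iInter, mem_Ioi, mem_empty_iff_false, iff_false, not_forall, not_lt]
    obtain ⟨n, hn⟩ := pow_unbounded_of_one_lt ((y - K)/(x - K)) (one_lt_one_div hm0 hm1)
    refine ⟨n, le_of_lt ?_⟩
    refine lt_of_lt_of_le ?_ (hgrow n)
    rw [div_lt_iff₀ (by linarith : (0:ℝ) < x - K)] at hn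
    nlinarith
  rw [hempty, measure_empty] at hlim
  exact le_antisymm (ge_of_tendsto' hlim chain) zero_le

lemma integrable_comp_affine {f : ℝ → ℝ} (hf : Integrable f volume) (α : ℝ) (hα : 0 < α) :
    Integrable (fun x => f ((x - 1)/α)) volume := by
  have hfun : (fun x : ℝ => (x - 1)/α) = fun x => α⁻¹ * x + (-α⁻¹) := by
    funext x; field_simp; ring
  have hmap : Measure.map (fun x : ℝ => α⁻¹ * x + (-α⁻¹)) volume
      = ENNReal.ofReal α • volume := by
    rw [map_affine_volume _ _ (inv_ne_zero hα.ne'), abs_of_pos (inv_pos.mpr hα), inv_inv]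
  have hme := measurableEmbedding_affine α⁻¹ (-α⁻¹) (inv_ne_zero hα.ne')
  have h2 : Integrable f (Measure.map (fun x : ℝ => α⁻¹ * x + (-α⁻¹)) volume) := by
    rw [hmap]; exact hf.smul_measure ENNReal.ofReal_ne_top
  have := (hme.integrable_map_iff).mp h2
  rw [← hfun] at this; exact this

lemma integral_comp_affine {f : ℝ → ℝ} (hf : Integrable f volume) (α : ℝ) (hα : 0 < α) :
    ∫ x, f ((x - 1)/α) = α * ∫ x, f x := by
  have hfun : (fun x : ℝ => (x - 1)/α) = fun x => α⁻¹ * x + (-α⁻¹) := by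
    funext x; field_simp; ring
  have hmap : Measure.map (fun x : ℝ => α⁻¹ * x + (-α⁻¹)) volume
      = ENNReal.ofReal α • volume := by
    rw [map_affine_volume _ _ (inv_ne_zero hα.ne'), abs_of_pos (inv_pos.mpr hα), inv_inv]
  have hme := measurableEmbedding_affine α⁻¹ (-α⁻¹) (inv_ne_zero hα.ne')
  have hsm : AEStronglyMeasurable f (Measure.map (fun x : ℝ => α⁻¹ * x + (-α⁻¹)) volume) := by
    rw [hmap]
    exact hf.1.mono_ac (Measure.absolutelyContinuous_of_le_smul le_rfl)
  have := integral_map hme.measurable.aemeasurable hsm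
  rw [hmap, integral_smul_measure, ENNReal.toReal_ofReal hα.le] at this
  have hptw : ∀ x : ℝ, f ((x - 1)/α) = f (α⁻¹ * x + (-α⁻¹)) :=
    fun x => congrArg f (congrFun hfun x)
  rw [integral_congr_ae (Filter.Eventually.of_forall hptw), ← this, smul_eq_mul]

lemma IsSol.unique (hp0 : 0 < p) (hp1 : p < 1) {μ₁ μ₂ : Measure ℝ}
    [IsProbabilityMeasure μ₁] [IsProbabilityMeasure μ₂]
    (h₁ : IsSol p μ₁) (h₂ : IsSol p μ₂) : μ₁ = μ₂ := by
  have hq0 : 0 < 1 - p := by linarith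
  set K : ℝ := (1 - max p (1 - p))⁻¹ with hK_def
  have hm1 : max p (1 - p) < 1 := max_lt hp1 (by linarith)
  have hm0 : 0 < max p (1 - p) := lt_max_of_lt_left hp0
  have hK1 : 1 < K := by
    rw [hK_def, lt_inv_comm₀ (by norm_num) (by linarith)]; linarith
  set B : ℝ := K + 1 with hB_def
  have cdf_eq : ∀ (μ : Measure ℝ), IsProbabilityMeasure μ → IsSol p μ → ∀ x : ℝ,
      (μ (Iic x)).toReal = p * (μ (Iic ((x - 1)/p))).toReal
        + (1 - p) * (μ (Iic ((x - 1)/(1 - p)))).toReal := by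
    intro μ _ h x
    rw [h.apply measurableSet_Iic, preimage_affine_Iic p x hp0,
      preimage_affine_Iic (1 - p) x hq0,
      ENNReal.toReal_add (ENNReal.mul_ne_top ENNReal.ofReal_ne_top (measure_ne_top μ _))
        (ENNReal.mul_ne_top ENNReal.ofReal_ne_top (measure_ne_top μ _)),
      ENNReal.toReal_mul, ENNReal.toReal_mul,
      ENNReal.toReal_ofReal hp0.le, ENNReal.toReal_ofReal hq0.le]
  have cdf_zero : ∀ (μ : Measure ℝ), IsProbabilityMeasure μ → IsSol p μ → ∀ x : ℝ,
      x < 1 → (μ (Iic x)).toReal = 0 := by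
    intro μ _ h x hx
    rw [measure_mono_null (Iic_subset_Iio.mpr hx) (h.Iio_zero hp0 hp1 le_rfl)]
    simp
  have cdf_one : ∀ (μ : Measure ℝ), IsProbabilityMeasure μ → IsSol p μ → ∀ x : ℝ,
      B ≤ x → (μ (Iic x)).toReal = 1 := by
    intro μ _ h x hx
    have h0 : μ (Ioi x) = 0 := h.Ioi_zero hp0 hp1 (by rw [← hK_def]; linarith)
    have : μ (Iic x) = 1 := by
      rw [← compl_Ioi, measure_compl measurableSet_Ioi (measure_ne_top μ _), h0,
        measure_univ, tsub_zero]
    rw [this, ENNReal.toReal_one]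
  have cdf_mono : ∀ (μ : Measure ℝ), IsProbabilityMeasure μ →
      Monotone (fun x : ℝ => (μ (Iic x)).toReal) := by
    intro μ _ x y hxy
    exact ENNReal.toReal_mono (measure_ne_top μ _) (measure_mono (Iic_subset_Iic.mpr hxy))
  have cdf_le_one : ∀ (μ : Measure ℝ), IsProbabilityMeasure μ → ∀ x : ℝ,
      (μ (Iic x)).toReal ≤ 1 := by
    intro μ _ x
    rw [← ENNReal.toReal_one]
    exact ENNReal.toReal_mono ENNReal.one_ne_top prob_le_one
  set F : ℝ → ℝ := fun x => (μ₁ (Iic x)).toReal with hF_def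
  set G : ℝ → ℝ := fun x => (μ₂ (Iic x)).toReal with hG_def
  set h : ℝ → ℝ := fun x => F x - G x with hh_def
  have hfe : ∀ x, h x = p * h ((x - 1)/p) + (1 - p) * h ((x - 1)/(1 - p)) := by
    intro x
    simp only [hh_def, hF_def, hG_def]
    rw [cdf_eq μ₁ ‹_› h₁ x, cdf_eq μ₂ ‹_› h₂ x]
    ring
  have habs : ∀ x, |h x| ≤ p * |h ((x - 1)/p)| + (1 - p) * |h ((x - 1)/(1 - p))| := by
    intro x
    rw [hfe x]
    calc |p * h ((x - 1)/p) + (1 - p) * h ((x - 1)/(1 - p))|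
        ≤ |p * h ((x - 1)/p)| + |(1 - p) * h ((x - 1)/(1 - p))| := abs_add_le _ _
      _ = p * |h ((x - 1)/p)| + (1 - p) * |h ((x - 1)/(1 - p))| := by
          rw [abs_mul, abs_mul, abs_of_pos hp0, abs_of_pos hq0]
  have hvan : ∀ x, x ∉ Icc (1:ℝ) B → h x = 0 := by
    intro x hx
    rw [mem_Icc, not_and_or] at hx
    simp only [hh_def, hF_def, hG_def]
    rcases hx with hx | hx
    · push_neg at hx
      rw [cdf_zero μ₁ ‹_› h₁ x hx, cdf_zero μ₂ ‹_› h₂ x hx, sub_self]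
    · push_neg at hx
      rw [cdf_one μ₁ ‹_› h₁ x hx.le, cdf_one μ₂ ‹_› h₂ x hx.le, sub_self]
  have hmeas : Measurable h :=
    ((cdf_mono μ₁ ‹_›).measurable).sub ((cdf_mono μ₂ ‹_›).measurable)
  have hint : Integrable h volume := by
    refine Integrable.mono' (g := (Icc (1:ℝ) B).indicator (fun _ => (2:ℝ))) ?_
      hmeas.aestronglyMeasurable (Eventually.of_forall fun x => ?_)
    · exact (integrable_indicator_iff measurableSet_Icc).mpr
        (integrableOn_const measure_Icc_lt_top.ne)
    · by_cases hx : x ∈ Icc (1:ℝ) B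
      · rw [indicator_of_mem hx, Real.norm_eq_abs]
        have := cdf_le_one μ₁ ‹_› x
        have := cdf_le_one μ₂ ‹_› x
        have h1 : (0:ℝ) ≤ F x := ENNReal.toReal_nonneg
        have h2 : (0:ℝ) ≤ G x := ENNReal.toReal_nonneg
        rw [abs_sub_le_iff]
        constructor <;> [skip; skip] <;>
          · simp only [hF_def, hG_def] at *
            linarith
      · rw [indicator_of_notMem hx, hvan x hx, Real.norm_eq_abs, abs_zero]
  have habs_int : Integrable (fun x => |h x|) volume := hint.abs
  have hcu : Integrable (fun x => |h ((x - 1)/p)|) volume :=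
    integrable_comp_affine habs_int p hp0
  have hcv : Integrable (fun x => |h ((x - 1)/(1 - p))|) volume :=
    integrable_comp_affine habs_int (1 - p) hq0
  have hI0 : 0 ≤ ∫ x, |h x| := integral_nonneg fun x => abs_nonneg _
  have hIneq : ∫ x, |h x| ≤ (p * p + (1 - p) * (1 - p)) * ∫ x, |h x| := by
    calc ∫ x, |h x|
        ≤ ∫ x, (p * |h ((x - 1)/p)| + (1 - p) * |h ((x - 1)/(1 - p))|) :=
          integral_mono habs_int ((hcu.const_mul p).add (hcv.const_mul (1 - p))) habs
      _ = p * (∫ x, |h ((x - 1)/p)|) + (1 - p) * ∫ x, |h ((x - 1)/(1 - p))| := by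
          rw [integral_add (hcu.const_mul p) (hcv.const_mul (1 - p))]
          simp only [integral_const_mul]
      _ = p * (p * (∫ x, |h x|)) + (1 - p) * ((1 - p) * ∫ x, |h x|) := by
          have e1 : (∫ x, |h ((x - 1)/p)|) = p * ∫ x, |h x| :=
            integral_comp_affine habs_int p hp0
          have e2 : (∫ x, |h ((x - 1)/(1 - p))|) = (1 - p) * ∫ x, |h x| :=
            integral_comp_affine habs_int (1 - p) hq0
          rw [e1, e2]
      _ = (p * p + (1 - p) * (1 - p)) * ∫ x, |h x| := by ring
  have hIzero : ∫ x, |h x| = 0 := by nlinarith [mul_pos hp0 hq0]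
  have hae0 : (fun x => |h x|) =ᵐ[volume] 0 :=
    (integral_eq_zero_iff_of_nonneg (fun x => abs_nonneg _) habs_int).mp hIzero
  have hae : ∀ᵐ x : ℝ, μ₁ (Iic x) = μ₂ (Iic x) := by
    filter_upwards [hae0] with x hx
    have hx0 : h x = 0 := abs_eq_zero.mp hx
    have : F x = G x := by simpa [hh_def, sub_eq_zero] using hx0
    exact (ENNReal.toReal_eq_toReal_iff' (measure_ne_top μ₁ _) (measure_ne_top μ₂ _)).mp this
  refine Measure.ext_of_Iic μ₁ μ₂ fun x => ?_
  have hS : volume {y : ℝ | ¬ (μ₁ (Iic y) = μ₂ (Iic y))} = 0 := hae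
  have hpick : ∀ n : ℕ, ∃ y : ℝ, μ₁ (Iic y) = μ₂ (Iic y) ∧ x < y ∧ y ≤ x + 1/(n+1) := by
    intro n
    by_contra hcon
    push_neg at hcon
    have hsub : Ioo x (x + 1/((n:ℝ)+1)) ⊆ {y : ℝ | ¬ (μ₁ (Iic y) = μ₂ (Iic y))} := by
      intro y hy hyS
      exact absurd (hcon y hyS hy.1) (not_lt.mpr hy.2.le)
    have h0 := measure_mono_null hsub hS
    rw [Real.volume_Ioo] at h0
    have hpos : (0:ℝ) < x + 1/((n:ℝ)+1) - x := by
      have : (0:ℝ) < 1/((n:ℝ)+1) := by positivity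
      linarith
    rw [ENNReal.ofReal_eq_zero] at h0
    linarith
  choose y hyS hy1 hy2 using hpick
  have hinter : (⋂ n : ℕ, Iic (x + 1/((n:ℝ)+1))) = Iic x := by
    ext z
    simp only [mem_iInter, mem_Iic]
    constructor
    · intro hz
      by_contra hzx
      push_neg at hzx
      obtain ⟨n, hn⟩ := exists_nat_one_div_lt (by linarith : (0:ℝ) < z - x)
      have := hz n
      linarith
    · intro hz n
      have : (0:ℝ) < 1/((n:ℝ)+1) := by positivity
      linarith
  have hanti : Antitone (fun n : ℕ => Iic (x + 1/((n:ℝ)+1))) := by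
    intro i j hij
    apply Iic_subset_Iic.mpr
    have hij' : ((i:ℝ)+1) ≤ ((j:ℝ)+1) := by exact_mod_cast Nat.succ_le_succ hij
    have := one_div_le_one_div_of_le (by positivity : (0:ℝ) < (i:ℝ)+1) hij'
    linarith
  have lim : ∀ (μ : Measure ℝ), IsProbabilityMeasure μ →
      Tendsto (fun n : ℕ => μ (Iic (x + 1/((n:ℝ)+1)))) atTop (𝓝 (μ (Iic x))) := by
    intro μ _
    have := tendsto_measure_iInter_atTop (μ := μ)
      (fun n => measurableSet_Iic.nullMeasurableSet) hanti ⟨0, measure_ne_top μ _⟩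
    rwa [hinter] at this
  have le12 : μ₁ (Iic x) ≤ μ₂ (Iic x) := by
    refine ge_of_tendsto (lim μ₂ ‹_›) (Eventually.of_forall fun n => ?_)
    calc μ₁ (Iic x) ≤ μ₁ (Iic (y n)) := measure_mono (Iic_subset_Iic.mpr (hy1 n).le)
      _ = μ₂ (Iic (y n)) := hyS n
      _ ≤ μ₂ (Iic (x + 1/((n:ℝ)+1))) := measure_mono (Iic_subset_Iic.mpr (hy2 n))
  have le21 : μ₂ (Iic x) ≤ μ₁ (Iic x) := by
    refine ge_of_tendsto (lim μ₁ ‹_›) (Eventually.of_forall fun n => ?_)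
    calc μ₂ (Iic x) ≤ μ₂ (Iic (y n)) := measure_mono (Iic_subset_Iic.mpr (hy1 n).le)
      _ = μ₁ (Iic (y n)) := (hyS n).symm
      _ ≤ μ₁ (Iic (x + 1/((n:ℝ)+1))) := measure_mono (Iic_subset_Iic.mpr (hy2 n))
  exact le_antisymm le12 le21

lemma exists_lt (p : ℝ) (hp0 : 0 < p) (hhalf : p < 1/2)
    (ν : Measure ℝ)
    (hν : ν = Measure.map
      (fun x : ℝ => (1 - 2 * p) / (p * (1 - p)) * x + 1 / (1 - p))
      (volume.restrict (Set.Icc (0 : ℝ) 1))) :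
    (ENNReal.ofReal p • Measure.map (fun z : ℝ => p * z + 1) ν +
        ENNReal.ofReal (1 - p) • Measure.map (fun z : ℝ => (1 - p) * z + 1) ν = ν) := by
  have hq0 : 0 < 1 - p := by linarith
  set a : ℝ := (1 - 2 * p) / (p * (1 - p)) with ha_def
  set c : ℝ := 1 / (1 - p) with hc_def
  have ha : 0 < a := div_pos (by linarith) (by positivity)
  have hac : a + c = 1/p := by rw [ha_def, hc_def]; field_simp; ring
  clear_value a c
  have hν' : ν = ENNReal.ofReal |a|⁻¹ • volume.restrict (Icc c (a + c)) := by
    rw [hν, map_affine_restrict a c ha.ne' _ _ ?_]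
    rw [preimage_affine_Icc a c c (a + c) ha]
    norm_num [div_self ha.ne']
  have key : ∀ α : ℝ, 0 < α → ∀ l r : ℝ, (l - 1)/α = c → (r - 1)/α = a + c →
      Measure.map (fun z : ℝ => α * z + 1) ν
        = ENNReal.ofReal |a|⁻¹ • (ENNReal.ofReal |α|⁻¹ • volume.restrict (Icc l r)) := by
    intro α hα l r hl hr
    rw [hν', Measure.map_smul, map_affine_restrict α 1 hα.ne' _ _ ?_]
    rw [preimage_affine_Icc α 1 l r hα, hl, hr]
  have h1 : (c - 1)/p = c := by rw [hc_def]; field_simp; ring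
  have h2 : ((2:ℝ) - 1)/p = a + c := by rw [hac]; norm_num
  have h3 : ((2:ℝ) - 1)/(1-p) = c := by rw [hc_def]; norm_num
  have h4 : ((a + c) - 1)/(1-p) = a + c := by rw [hac]; field_simp
  rw [key p hp0 c 2 h1 h2, key (1-p) hq0 2 (a+c) h3 h4,
    coef_simp a ha.ne' p hp0, coef_simp a ha.ne' (1-p) hq0,
    ← smul_add,
    restrict_Icc_add_restrict_Icc c 2 (a+c)
      (by rw [hc_def, div_le_iff₀ hq0]; linarith)
      (by rw [hac, le_div_iff₀ hp0]; linarith),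
    hν']

lemma exists_gt (p : ℝ) (hp1 : p < 1) (hhalf : 1/2 < p)
    (ν : Measure ℝ)
    (hν : ν = Measure.map
      (fun x : ℝ => (1 - 2 * p) / (p * (1 - p)) * x + 1 / (1 - p))
      (volume.restrict (Set.Icc (0 : ℝ) 1))) :
    (ENNReal.ofReal p • Measure.map (fun z : ℝ => p * z + 1) ν +
        ENNReal.ofReal (1 - p) • Measure.map (fun z : ℝ => (1 - p) * z + 1) ν = ν) := by
  have hp0 : 0 < p := by linarith
  have hq0 : 0 < 1 - p := by linarith
  set a : ℝ := (1 - 2 * p) / (p * (1 - p)) with ha_def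
  set c : ℝ := 1 / (1 - p) with hc_def
  have ha : a < 0 := by rw [ha_def]; exact div_neg_of_neg_of_pos (by linarith) (by positivity)
  have hac : a + c = 1/p := by rw [ha_def, hc_def]; field_simp; ring
  clear_value a c
  have hν' : ν = ENNReal.ofReal |a|⁻¹ • volume.restrict (Icc (a + c) c) := by
    rw [hν, map_affine_restrict a c ha.ne _ _ ?_]
    rw [preimage_affine_Icc_neg a c (a + c) c ha]
    norm_num [div_self ha.ne]
  have key : ∀ α : ℝ, 0 < α → ∀ l r : ℝ, (l - 1)/α = a + c → (r - 1)/α = c →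
      Measure.map (fun z : ℝ => α * z + 1) ν
        = ENNReal.ofReal |a|⁻¹ • (ENNReal.ofReal |α|⁻¹ • volume.restrict (Icc l r)) := by
    intro α hα l r hl hr
    rw [hν', Measure.map_smul, map_affine_restrict α 1 hα.ne' _ _ ?_]
    rw [preimage_affine_Icc α 1 l r hα, hl, hr]
  have h1 : ((2:ℝ) - 1)/p = a + c := by rw [hac]; norm_num
  have h2 : (c - 1)/p = c := by rw [hc_def]; field_simp; ring
  have h3 : ((a + c) - 1)/(1-p) = a + c := by rw [hac]; field_simp
  have h4 : ((2:ℝ) - 1)/(1-p) = c := by rw [hc_def]; norm_num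
  rw [key p hp0 2 c h1 h2, key (1-p) hq0 (a+c) 2 h3 h4,
    coef_simp a ha.ne p hp0, coef_simp a ha.ne (1-p) hq0,
    ← smul_add, add_comm (volume.restrict (Icc 2 c)),
    restrict_Icc_add_restrict_Icc (a+c) 2 c
      (by rw [hac, div_le_iff₀ hp0]; linarith)
      (by rw [hc_def, le_div_iff₀ hq0]; linarith),
    hν']

lemma exists_eq
    (ν : Measure ℝ)
    (hν : ν = Measure.map
      (fun x : ℝ => (1 - 2 * (1/2 : ℝ)) / ((1/2 : ℝ) * (1 - 1/2)) * x + 1 / (1 - 1/2))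
      (volume.restrict (Set.Icc (0 : ℝ) 1))) :
    (ENNReal.ofReal (1/2 : ℝ) • Measure.map (fun z : ℝ => (1/2 : ℝ) * z + 1) ν +
        ENNReal.ofReal (1 - 1/2 : ℝ) • Measure.map (fun z : ℝ => (1 - 1/2 : ℝ) * z + 1) ν
        = ν) := by
  have hf : (fun x : ℝ => (1 - 2 * (1/2 : ℝ)) / ((1/2 : ℝ) * (1 - 1/2)) * x + 1 / (1 - 1/2))
      = fun _ : ℝ => (2:ℝ) := by funext x; norm_num
  have hν' : ν = Measure.dirac 2 := by
    rw [hν, hf, Measure.map_const, Measure.restrict_apply_univ, Real.volume_Icc]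
    norm_num
  have hg : ∀ α : ℝ, Measure.map (fun z : ℝ => α * z + 1) (Measure.dirac 2)
      = Measure.dirac (α * 2 + 1) := fun α =>
    Measure.map_dirac' (by fun_prop) 2
  rw [hν', hg, hg]
  norm_num
  rw [← add_smul]
  have : ENNReal.ofReal (1/2) + ENNReal.ofReal (1/2) = 1 := by
    rw [← ENNReal.ofReal_add (by norm_num) (by norm_num)]; norm_num
  rw [this, one_smul]

end PerpetuityAux

open PerpetuityAux in
/-- In the anti-symmetric case `b = 2`, `p = p₀₀ = p₁₁`, the unique solution of the
perpetuity `Z₀ ≐ (B_p p + (1−B_p)(1−p)) Z₀ + 1` is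
`Z₀ = ((1−2p)/(p(1−p))) ξ + 1/(1−p)` with `ξ` uniform on `[0,1]`: the law of this random
variable satisfies the perpetuity equation, and it is the unique probability law doing
so. -/
theorem perpetuity_explicit_solution (p : ℝ) (hp0 : 0 < p) (hp1 : p < 1)
    (ν : Measure ℝ)
    (hν : ν = Measure.map
      (fun x : ℝ => (1 - 2 * p) / (p * (1 - p)) * x + 1 / (1 - p))
      (volume.restrict (Set.Icc (0 : ℝ) 1))) :
    (ENNReal.ofReal p • Measure.map (fun z : ℝ => p * z + 1) ν +
        ENNReal.ofReal (1 - p) • Measure.map (fun z : ℝ => (1 - p) * z + 1) ν = ν) ∧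
    (∀ ν' : Measure ℝ, IsProbabilityMeasure ν' →
      (ENNReal.ofReal p • Measure.map (fun z : ℝ => p * z + 1) ν' +
        ENNReal.ofReal (1 - p) • Measure.map (fun z : ℝ => (1 - p) * z + 1) ν' = ν') →
      ν' = ν) := by
  have hex : ENNReal.ofReal p • Measure.map (fun z : ℝ => p * z + 1) ν +
      ENNReal.ofReal (1 - p) • Measure.map (fun z : ℝ => (1 - p) * z + 1) ν = ν := by
    rcases lt_trichotomy p (1/2) with hc | hc | hc
    · exact exists_lt p hp0 hc ν hν
    · subst hc
      exact exists_eq ν hν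
    · exact exists_gt p hp1 hc ν hν
  refine ⟨hex, fun ν' hprob hsol => ?_⟩
  have hinst : IsProbabilityMeasure (volume.restrict (Set.Icc (0:ℝ) 1)) := by
    constructor
    rw [Measure.restrict_apply_univ, Real.volume_Icc]
    norm_num
  have hνprob : IsProbabilityMeasure ν := by
    rw [hν]
    exact Measure.isProbabilityMeasure_map (by fun_prop)
  exact IsSol.unique hp0 hp1 hsol hex
end
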